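/- Let (V,⟨·,·⟩) be a real inner product space of signature (p,q) and ξ ⊆ ⊗^k V* a subspace invariant under pull-back by all isometries of ⟨·,·⟩ that commute or anticommute with a fixed pseudo-Hermitian structure J (the group 𝒰*). Then the canonical extension of ⟨·,·⟩ to ⊗^k V* restricts to a nondegenerate form on ξ. -/

import Mathlib

open scoped TensorProduct
open scoped RealInnerProductSpace

/-- Existence of a "sign involution" `σ` in the group `𝒰*` together with a basis `e`
which is `B ∘ σ`-orthonormal. -/
private lemma exists_good_basis {V : Type*} [AddCommGroup V] [Module ℝ V]
    [FiniteDimensional ℝ V]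
    (B : V →ₗ[ℝ] V →ₗ[ℝ] ℝ) (J : V →ₗ[ℝ] V)
    (hBsymm : ∀ x y, B x y = B y x)
    (hBnd : ∀ x, (∀ y, B x y = 0) → x = 0)
    (hJ2 : ∀ x, J (J x) = -x)
    (hJB : ∀ x y, B (J x) (J y) = B x y) :
    ∃ (n : ℕ) (e : Module.Basis (Fin n) ℝ V) (σ : V →ₗ[ℝ] V),
      (∀ i j, B (σ (e i)) (e j) = if i = j then 1 else 0) ∧
      (∀ x y, B (σ x) (σ y) = B x y) ∧
      (∀ x, σ (J x) = J (σ x)) := by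
  classical
  -- an auxiliary positive definite, `J`-invariant inner product
  set b0 : Module.Basis (Fin (Module.finrank ℝ V)) ℝ V := Module.finBasis ℝ V with hb0
  set P : V → V → ℝ := fun x y => ∑ i, b0.repr x i * b0.repr y i with hP
  have hPpos : ∀ x, 0 ≤ P x x := by
    intro x
    exact Finset.sum_nonneg fun i _ => mul_self_nonneg _
  have hPdef : ∀ x, P x x = 0 → x = 0 := by
    intro x hx
    have h0 : ∀ i ∈ Finset.univ, b0.repr x i * b0.repr x i = 0 := by
      rw [Finset.sum_eq_zero_iff_of_nonneg (fun i _ => mul_self_nonneg _)] at hx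
      exact hx
    have : ∀ i, b0.repr x i = 0 := fun i =>
      mul_self_eq_zero.mp (h0 i (Finset.mem_univ i))
    apply b0.ext_elem
    intro i
    simp [this i]
  have hPneg : ∀ x y, P (-x) (-y) = P x y := by
    intro x y
    simp [hP]
  letI core : InnerProductSpace.Core ℝ V :=
    { inner := fun x y => P x y + P (J x) (J y)
      conj_inner_symm := by
        intro x y
        simp only [starRingEnd_apply, star_trivial, hP]
        congr 1 <;> exact Finset.sum_congr rfl fun i _ => mul_comm _ _
      re_inner_nonneg := by
        intro x
        simpa using add_nonneg (hPpos x) (hPpos (J x))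
      definite := by
        intro x hx
        change P x x + P (J x) (J x) = 0 at hx
        have h1 : P x x = 0 :=
          le_antisymm (by nlinarith [hPpos (J x)]) (hPpos x)
        exact hPdef x h1
      add_left := by
        intro x y z
        simp only [hP, map_add, Finsupp.add_apply, add_mul, Finset.sum_add_distrib]
        ring
      smul_left := by
        intro x y r
        simp only [hP, map_smul, Finsupp.smul_apply, smul_eq_mul, starRingEnd_apply,
          star_trivial, Finset.mul_sum, mul_add]
        congr 1 <;> exact Finset.sum_congr rfl fun i _ => by ring }
  letI : NormedAddCommGroup V := core.toNormedAddCommGroup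
  letI : InnerProductSpace ℝ V := InnerProductSpace.ofCore core.toCore
  haveI : CompleteSpace V := FiniteDimensional.complete ℝ V
  have hinner : ∀ x y : V, ⟪x, y⟫ = P x y + P (J x) (J y) := fun _ _ => rfl
  -- the inner product is `J`-invariant
  have hJinner : ∀ x y : V, ⟪J x, J y⟫ = ⟪x, y⟫ := by
    intro x y
    rw [hinner, hinner, hJ2, hJ2, hPneg]
    ring
  have hJneg : ∀ u y : V, ⟪J u, y⟫ = -⟪u, J y⟫ := by
    intro u y
    have hy : J (J (-y)) = y := by rw [hJ2]; simp
    calc ⟪J u, y⟫ = ⟪J u, J (J (-y))⟫ := by rw [hy]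
      _ = ⟪u, J (-y)⟫ := hJinner u (J (-y))
      _ = -⟪u, J y⟫ := by rw [map_neg, inner_neg_right]
  have hBJ' : ∀ x y, B (J x) y = -B x (J y) := by
    intro x y
    have h := hJB x (J y)
    rw [hJ2] at h
    simp only [map_neg, LinearMap.neg_apply] at h
    linarith
  -- the operator representing `B` w.r.t. the inner product
  set S : V →ₗ[ℝ] V :=
    { toFun := fun x => (InnerProductSpace.toDual ℝ V).symm
        (LinearMap.toContinuousLinearMap (B x))
      map_add' := by intro x y; simp [map_add]
      map_smul' := by intro c x; simp }
    with hSdef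
  have hSapp : ∀ x y, ⟪S x, y⟫ = B x y := by
    intro x y
    simp [hSdef, InnerProductSpace.toDual_symm_apply]
  have hS : S.IsSymmetric := by
    intro x y
    rw [hSapp, real_inner_comm, hSapp, hBsymm]
  have hn : Module.finrank ℝ V = Module.finrank ℝ V := rfl
  set b : OrthonormalBasis (Fin (Module.finrank ℝ V)) ℝ V := hS.eigenvectorBasis hn with hbdef
  set μ : Fin (Module.finrank ℝ V) → ℝ := hS.eigenvalues hn with hμdef
  have hSb : ∀ i, S (b i) = μ i • b i := by
    intro i
    have h := hS.apply_eigenvectorBasis hn i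
    rw [← hbdef, ← hμdef] at h
    exact_mod_cast h
  have hμ : ∀ i, μ i ≠ 0 := by
    intro i h
    have hb0' : b i = (0 : V) := by
      apply hBnd
      intro y
      rw [← hSapp, hSb, h]
      simp
    exact (b.toBasis.ne_zero i) (by simpa using hb0')
  set ε : Fin (Module.finrank ℝ V) → ℝ := fun i => if 0 ≤ μ i then 1 else -1 with hεdef
  have hε2 : ∀ i, ε i * ε i = 1 := by
    intro i; by_cases h : 0 ≤ μ i <;> simp [hεdef, h]
  have hεμ : ∀ i, μ i * |μ i|⁻¹ = ε i := by
    intro i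
    by_cases h : 0 ≤ μ i
    · rw [abs_of_nonneg h, mul_inv_cancel₀ (hμ i)]
      simp [hεdef, h]
    · rw [abs_of_neg (lt_of_not_ge h), inv_neg, mul_neg, mul_inv_cancel₀ (hμ i)]
      simp [hεdef, h]
  -- scaled basis
  set u : Fin (Module.finrank ℝ V) → ℝˣ := fun i =>
    Units.mk0 ((Real.sqrt |μ i|)⁻¹)
      (inv_ne_zero ((Real.sqrt_ne_zero' ).mpr (abs_pos.mpr (hμ i)))) with hudef
  set e : Module.Basis (Fin (Module.finrank ℝ V)) ℝ V := b.toBasis.unitsSMul u with hedef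
  have he : ∀ i, e i = (Real.sqrt |μ i|)⁻¹ • b i := by
    intro i
    rw [hedef, Module.Basis.unitsSMul_apply]
    simp [hudef, Units.smul_def]
  have hSe : ∀ i, S (e i) = μ i • e i := by
    intro i
    rw [he, map_smul, hSb, smul_comm]
  have hBee : ∀ i j, B (e i) (e j) = if i = j then ε i else 0 := by
    intro i j
    rw [← hSapp, hSe, real_inner_smul_left, he, he, real_inner_smul_left,
      real_inner_smul_right, orthonormal_iff_ite.mp b.orthonormal]
    by_cases h : i = j
    · subst h
      simp only [if_true, mul_one, eq_self_iff_true]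
      rw [← mul_inv, Real.mul_self_sqrt (abs_nonneg _)]
      exact hεμ i
    · simp [h]
  set σ : V →ₗ[ℝ] V := e.constr ℝ (fun i => ε i • e i) with hσdef
  have hσe : ∀ i, σ (e i) = ε i • e i := by
    intro i
    rw [hσdef, Module.Basis.constr_basis]
  -- the delta property
  have hδ : ∀ i j, B (σ (e i)) (e j) = if i = j then 1 else 0 := by
    intro i j
    rw [hσe, map_smul]
    simp only [LinearMap.smul_apply, smul_eq_mul, hBee]
    by_cases h : i = j
    · simp [h, hε2]
    · simp [h]
  -- isometry
  have hisoLM : (B.comp σ).compl₂ σ = B := by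
    apply e.ext; intro i
    apply e.ext; intro j
    simp only [LinearMap.compl₂_apply, LinearMap.comp_apply]
    rw [hσe, hσe, map_smul]
    simp only [LinearMap.smul_apply, smul_eq_mul, map_smul, hBee]
    by_cases h : i = j
    · subst h
      simp only [if_pos rfl]
      rw [← mul_assoc, hε2]
      ring
    · simp [h]
  have hiso : ∀ x y, B (σ x) (σ y) = B x y := by
    intro x y
    have := LinearMap.congr_fun (LinearMap.congr_fun hisoLM x) y
    simpa using this
  -- sign lemma: σ acts as sign(c) on the eigenspace of S with eigenvalue c
  have hsign : ∀ (v : V) (c : ℝ), S v = c • v →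
      σ v = (if 0 ≤ c then (1 : ℝ) else -1) • v := by
    intro v c hv
    have hrep : ∀ j, μ j * b.repr v j = c * b.repr v j := by
      intro j
      have h := hS.eigenvectorBasis_apply_self_apply hn v j
      rw [hv] at h
      rw [← hbdef, ← hμdef] at h
      simpa using h.symm
    have heig : ∀ j, e.repr v j ≠ 0 → μ j = c := by
      intro j hj
      have hb : b.repr v j ≠ 0 := by
        rw [hedef] at hj
        rw [Module.Basis.repr_unitsSMul] at hj
        intro h0
        apply hj
        rw [← b.coe_toBasis_repr_apply] at h0
        rw [h0]
        simp
      have := hrep j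
      rw [← b.coe_toBasis_repr_apply] at hb
      by_contra hne
      exact hb (by
        have : (μ j - c) * b.repr v j = 0 := by linarith [hrep j]
        rcases mul_eq_zero.mp this with h | h
        · exact absurd (by linarith : μ j = c) hne
        · rw [← b.coe_toBasis_repr_apply] at h; exact h)
    calc σ v = σ (∑ j, e.repr v j • e j) := by rw [e.sum_repr]
      _ = ∑ j, e.repr v j • (ε j • e j) := by
          rw [map_sum]; exact Finset.sum_congr rfl fun j _ => by rw [map_smul, hσe]
      _ = ∑ j, (if 0 ≤ c then (1 : ℝ) else -1) • (e.repr v j • e j) := by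
          apply Finset.sum_congr rfl
          intro j _
          by_cases hj : e.repr v j = 0
          · simp [hj]
          · rw [smul_comm]
            congr 1
            rw [hεdef]
            simp only []
            rw [heig j hj]
      _ = (if 0 ≤ c then (1 : ℝ) else -1) • v := by
          rw [← Finset.smul_sum, e.sum_repr]
  -- σ commutes with J
  have hJS : ∀ x, S (J x) = J (S x) := by
    intro x
    apply ext_inner_right ℝ
    intro y
    rw [hSapp, hJneg, hSapp x (J y)]
    exact hBJ' x y
  have hcommLM : σ ∘ₗ J = J ∘ₗ σ := by
    apply b.toBasis.ext
    intro i
    simp only [LinearMap.comp_apply, OrthonormalBasis.coe_toBasis]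
    have h1 : S (J (b i)) = μ i • J (b i) := by rw [hJS, hSb, map_smul]
    rw [hsign (J (b i)) (μ i) h1, hsign (b i) (μ i) (hSb i), map_smul]
  refine ⟨Module.finrank ℝ V, e, σ, hδ, hiso, fun x => LinearMap.congr_fun hcommLM x⟩

theorem stmt_16 {V : Type*} [AddCommGroup V] [Module ℝ V] [FiniteDimensional ℝ V]
    (B : V →ₗ[ℝ] V →ₗ[ℝ] ℝ) (J : V →ₗ[ℝ] V)
    (hBsymm : ∀ x y, B x y = B y x)
    (hBnd : ∀ x, (∀ y, B x y = 0) → x = 0)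
    (hJ2 : ∀ x, J (J x) = -x)
    (hJB : ∀ x y, B (J x) (J y) = B x y)
    (k : ℕ)
    (Bk : (⨂[ℝ] _ : Fin k, V) →ₗ[ℝ] (⨂[ℝ] _ : Fin k, V) →ₗ[ℝ] ℝ)
    (hBk : ∀ v w : Fin k → V,
      Bk (PiTensorProduct.tprod ℝ v) (PiTensorProduct.tprod ℝ w) = ∏ i, B (v i) (w i))
    (ξ : Submodule ℝ (⨂[ℝ] _ : Fin k, V))
    (hinv : ∀ T : V →ₗ[ℝ] V, (∀ x y, B (T x) (T y) = B x y) →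
      ((∀ x, T (J x) = J (T x)) ∨ (∀ x, T (J x) = - J (T x))) →
      ∀ t ∈ ξ, PiTensorProduct.map (fun _ : Fin k => T) t ∈ ξ) :
    ∀ t ∈ ξ, (∀ s ∈ ξ, Bk t s = 0) → t = 0 := by
  classical
  obtain ⟨n, e, σ, hδ, hiso, hcomm⟩ := exists_good_basis B J hBsymm hBnd hJ2 hJB
  -- coordinate functionals on the tensor power
  set L : (Fin k → Fin n) → (⨂[ℝ] _ : Fin k, V) →ₗ[ℝ] ℝ := fun f =>
    PiTensorProduct.lift
      ((MultilinearMap.mkPiAlgebra ℝ (Fin k) ℝ).compLinearMap (fun i => e.coord (f i)))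
    with hLdef
  have hLtprod : ∀ (f : Fin k → Fin n) (v : Fin k → V),
      L f (PiTensorProduct.tprod ℝ v) = ∏ i, e.repr (v i) (f i) := by
    intro f v
    rw [hLdef]
    simp [PiTensorProduct.lift.tprod, MultilinearMap.compLinearMap_apply,
      MultilinearMap.mkPiAlgebra_apply, Module.Basis.coord_apply]
  -- pointwise formula for B ∘ σ
  have hgLM : B.comp σ = ∑ j, (e.coord j).smulRight (e.coord j) := by
    apply e.ext; intro i
    apply e.ext; intro j'
    simp only [LinearMap.comp_apply, LinearMap.sum_apply, LinearMap.smulRight_apply,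
      LinearMap.smul_apply, smul_eq_mul]
    rw [hδ]
    by_cases h : i = j'
    · subst h
      simp [ite_apply, Module.Basis.coord_apply, Module.Basis.repr_self, Finsupp.single_apply]
    · simp [ite_apply, Module.Basis.coord_apply, Module.Basis.repr_self, Finsupp.single_apply, h, Ne.symm h]
  have hg : ∀ x y, B (σ x) y = ∑ j, e.repr x j * e.repr y j := by
    intro x y
    have := LinearMap.congr_fun (LinearMap.congr_fun hgLM x) y
    simpa using this
  -- expansion of any tensor in terms of the coordinate functionals
  have hexpLM : (LinearMap.id : (⨂[ℝ] _ : Fin k, V) →ₗ[ℝ] (⨂[ℝ] _ : Fin k, V)) =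
      ∑ f : Fin k → Fin n, (L f).smulRight (PiTensorProduct.tprod ℝ (fun i => e (f i))) := by
    apply PiTensorProduct.ext
    apply MultilinearMap.ext
    intro v
    simp only [LinearMap.compMultilinearMap_apply, LinearMap.id_apply, LinearMap.sum_apply,
      LinearMap.smulRight_apply, hLtprod]
    conv_lhs => rw [show v = fun i => ∑ j, e.repr (v i) j • e j from
      funext fun i => (e.sum_repr (v i)).symm]
    rw [MultilinearMap.map_sum]
    exact Finset.sum_congr rfl fun f _ => by rw [MultilinearMap.map_smul_univ]
  have hexp : ∀ t : ⨂[ℝ] _ : Fin k, V,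
      t = ∑ f : Fin k → Fin n, L f t • PiTensorProduct.tprod ℝ (fun i => e (f i)) := by
    intro t
    have := LinearMap.congr_fun hexpLM t
    simpa using this
  -- the quadratic form identity
  have hquadLM : Bk.comp (PiTensorProduct.map (fun _ : Fin k => σ)) =
      ∑ f : Fin k → Fin n, (L f).smulRight (L f) := by
    apply PiTensorProduct.ext
    apply MultilinearMap.ext
    intro v
    apply PiTensorProduct.ext
    apply MultilinearMap.ext
    intro w
    simp only [LinearMap.compMultilinearMap_apply, LinearMap.comp_apply,
      PiTensorProduct.map_tprod, LinearMap.sum_apply, LinearMap.smulRight_apply,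
      LinearMap.smul_apply, hLtprod, smul_eq_mul, hBk]
    calc ∏ i, B (σ (v i)) (w i) = ∏ i, ∑ j, e.repr (v i) j * e.repr (w i) j :=
          Finset.prod_congr rfl fun i _ => hg (v i) (w i)
      _ = ∑ f : Fin k → Fin n, ∏ i, (e.repr (v i) (f i) * e.repr (w i) (f i)) := by
          rw [Finset.prod_univ_sum, Fintype.piFinset_univ]
      _ = ∑ f : Fin k → Fin n, (∏ i, e.repr (v i) (f i)) * ∏ i, e.repr (w i) (f i) := by
          exact Finset.sum_congr rfl fun f _ => Finset.prod_mul_distrib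
  have hquad : ∀ t s, Bk (PiTensorProduct.map (fun _ : Fin k => σ) t) s =
      ∑ f : Fin k → Fin n, L f t * L f s := by
    intro t s
    have := LinearMap.congr_fun (LinearMap.congr_fun hquadLM t) s
    simpa using this
  -- symmetry of Bk
  have hBksymm : ∀ t s, Bk t s = Bk s t := by
    have h : Bk = Bk.flip := by
      apply PiTensorProduct.ext
      apply MultilinearMap.ext
      intro v
      apply PiTensorProduct.ext
      apply MultilinearMap.ext
      intro w
      simp only [LinearMap.compMultilinearMap_apply, LinearMap.flip_apply, hBk]
      exact Finset.prod_congr rfl fun i _ => hBsymm (v i) (w i)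
    intro t s
    simpa using LinearMap.congr_fun (LinearMap.congr_fun h t) s
  -- main argument
  intro t ht h0
  have h1 : PiTensorProduct.map (fun _ : Fin k => σ) t ∈ ξ :=
    hinv σ hiso (Or.inl hcomm) t ht
  have h2 : Bk (PiTensorProduct.map (fun _ : Fin k => σ) t) t = 0 := by
    rw [← hBksymm]
    exact h0 _ h1
  rw [hquad] at h2
  have h3 : ∀ f : Fin k → Fin n, L f t = 0 := by
    intro f
    have hnn : ∀ g ∈ (Finset.univ : Finset (Fin k → Fin n)), 0 ≤ L g t * L g t :=
      fun g _ => mul_self_nonneg _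
    have := (Finset.sum_eq_zero_iff_of_nonneg hnn).mp h2 f (Finset.mem_univ f)
    exact mul_self_eq_zero.mp this
  rw [hexp t]
  simp [h3]
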